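/- Let n be a positive integer, ρ ∈ [1/2, 1), and let Ω ≥ 0 satisfy Φ(Ω) = ρ, where Φ is the cumulative distribution function of the standard normal distribution. Let σ_1,…,σ_n ≥ 0, â_1,…,â_n and b be reals, let m be a positive integer with m ≥ √n/2, and set d_j^k = Ω·σ_j/m, f_j^k = 2k−1. Let a_1,…,a_n be independent random variables on a probability space with a_j normally distributed with mean â_j and variance σ_j². Then for every x ∈ {0,1}^n satisfying Σ_j â_j x_j + β(x, m²) ≤ b, the probability P(Σ_j a_j x_j ≤ b) satisfies ρ − P(Σ_j a_j x_j ≤ b) ≤ (1/√(2π))·Ω·(1 − √(1 − n/(4m²)))·exp(−(1/2)·Ω²·(1 − n/(4m²))). -/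

import Mathlib

open MeasureTheory ProbabilityTheory

section Stmt10Aux
open Real Finset

noncomputable def clamp01 (t : ℝ) : ℝ := max 0 (min 1 t)

lemma clamp01_nonneg (t : ℝ) : 0 ≤ clamp01 t := le_max_left _ _
lemma clamp01_le_one (t : ℝ) : clamp01 t ≤ 1 :=
  max_le zero_le_one (min_le_left _ _)
lemma clamp01_of_le (t : ℝ) (h : t ≤ 0) : clamp01 t = 0 :=
  max_eq_left ((min_le_right _ _).trans h)
lemma clamp01_of_ge (t : ℝ) (h : 1 ≤ t) : clamp01 t = 1 := by
  rw [clamp01, min_eq_left h, max_eq_right zero_le_one]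
lemma clamp01_of_pos (t : ℝ) (h : 0 ≤ t) : clamp01 t = min 1 t :=
  max_eq_right (le_min zero_le_one h)

lemma clampsum_gain (m : ℕ) (t : ℝ) :
    min t m ≤ ∑ k ∈ range m, clamp01 (t - k) := by
  induction m with
  | zero => simpa using min_le_right t 0
  | succ m ih =>
      rw [Finset.sum_range_succ]
      rcases le_total t m with h | h
      · have : min t ((m:ℝ)+1) ≤ min t m := by
          apply le_min (min_le_left _ _)
          exact (min_le_left _ _).trans h
        push_cast
        have h4 := clamp01_nonneg (t - (m:ℝ))
        have := this.trans ih
        linarith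
      · have h1 : min t m = (m:ℝ) := min_eq_right h
        have h2 : clamp01 (t - m) = min 1 (t - m) := clamp01_of_pos _ (by linarith)
        push_cast
        rw [h2]
        rcases le_total t ((m:ℝ)+1) with h3 | h3
        · have : min t ((m:ℝ)+1) = t := min_eq_left h3
          rw [this]
          have : min 1 (t - m) = t - m := min_eq_right (by linarith)
          rw [this] at *
          linarith [ih, h1]
        · have : min t ((m:ℝ)+1) = (m:ℝ)+1 := min_eq_right h3
          rw [this]
          have : min 1 (t - (m:ℝ)) = 1 := min_eq_left (by linarith)
          rw [this]
          linarith [ih, h1]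

lemma clampsum_all_one (m : ℕ) (t : ℝ) (h : (m:ℝ) ≤ t) :
    ∑ k ∈ range m, (2 * (k:ℝ) + 1) * clamp01 (t - k) = (m:ℝ)^2 := by
  induction m with
  | zero => simp
  | succ m ih =>
      have hm : (m:ℝ) ≤ t := by push_cast at h ⊢; linarith
      rw [Finset.sum_range_succ, ih hm, clamp01_of_ge _ (by push_cast at h ⊢; linarith)]
      push_cast
      ring

lemma clampsum_cost (m : ℕ) (t : ℝ) (ht : 0 ≤ t) :
    ∑ k ∈ range m, (2 * (k:ℝ) + 1) * clamp01 (t - k) ≤ t^2 + 1/4 := by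
  induction m with
  | zero => simp; positivity
  | succ m ih =>
      rw [Finset.sum_range_succ]
      rcases le_total t m with h | h
      · rw [clamp01_of_le _ (by linarith)]
        linarith [ih]
      · rw [clampsum_all_one m t h, clamp01_of_pos _ (by linarith)]
        rcases le_total (t - m) 1 with h2 | h2
        · rw [min_eq_right h2]
          nlinarith [sq_nonneg (t - m - 1/2)]
        · rw [min_eq_left h2]
          push_cast
          nlinarith

lemma pdf_conv_aux (a b : ℝ) (u v : NNReal) (hu : u ≠ 0) (hv : v ≠ 0) (y : ℝ) :
    Integrable (fun x => gaussianPDFReal a u x * gaussianPDFReal b v (y - x)) ∧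
    (∫ x, gaussianPDFReal a u x * gaussianPDFReal b v (y - x))
      = gaussianPDFReal (a + b) (u + v) y := by
  have hU : (0:ℝ) < u := lt_of_le_of_ne u.coe_nonneg (by exact_mod_cast (Ne.symm hu))
  have hV : (0:ℝ) < v := lt_of_le_of_ne v.coe_nonneg (by exact_mod_cast (Ne.symm hv))
  set U : ℝ := (u:ℝ)
  set V : ℝ := (v:ℝ)
  set α : ℝ := (U + V) / (2 * U * V) with hα
  have hαpos : 0 < α := by positivity
  set c : ℝ := (a * V + (y - b) * U) / (U + V) with hc
  set D : ℝ := gaussianPDFReal (a + b) (u + v) y * Real.sqrt (α / π) with hD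
  have key : (fun x => gaussianPDFReal a u x * gaussianPDFReal b v (y - x))
      = fun x => D * Real.exp (-α * (x - c) ^ 2) := by
    funext x
    simp only [gaussianPDFReal, hD]
    have hconst : (Real.sqrt (2 * π * U))⁻¹ * (Real.sqrt (2 * π * V))⁻¹
        = (Real.sqrt (2 * π * (U + V)))⁻¹ * Real.sqrt (α / π) := by
      rw [← Real.sqrt_inv, ← Real.sqrt_inv, ← Real.sqrt_inv, ← Real.sqrt_mul (by positivity),
        ← Real.sqrt_mul (by positivity)]
      congr 1
      rw [hα]
      field_simp
    have hexp : Real.exp (-(x - a) ^ 2 / (2 * U)) * Real.exp (-(y - x - b) ^ 2 / (2 * V))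
        = Real.exp (-(y - (a + b)) ^ 2 / (2 * (U + V))) * Real.exp (-α * (x - c) ^ 2) := by
      rw [← Real.exp_add, ← Real.exp_add]
      congr 1
      rw [hα, hc]
      field_simp
      ring
    push_cast
    calc (Real.sqrt (2 * π * U))⁻¹ * Real.exp (-(x - a) ^ 2 / (2 * U)) *
          ((Real.sqrt (2 * π * V))⁻¹ * Real.exp (-(y - x - b) ^ 2 / (2 * V)))
        = ((Real.sqrt (2 * π * U))⁻¹ * (Real.sqrt (2 * π * V))⁻¹) *
          (Real.exp (-(x - a) ^ 2 / (2 * U)) * Real.exp (-(y - x - b) ^ 2 / (2 * V))) := by ring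
      _ = _ := by
          rw [hconst, hexp]; ring
  constructor
  · rw [key]
    exact ((integrable_exp_neg_mul_sq hαpos).comp_sub_right c).const_mul D
  · rw [key]
    rw [integral_const_mul]
    have : (∫ x, Real.exp (-α * (x - c) ^ 2)) = ∫ x, Real.exp (-α * x ^ 2) :=
      integral_sub_right_eq_self (μ := volume) (fun x => Real.exp (-α * x ^ 2)) c
    rw [this, integral_gaussian, hD]
    have : Real.sqrt (α / π) * Real.sqrt (π / α) = 1 := by
      rw [← Real.sqrt_mul (by positivity)]
      rw [show α / π * (π / α) = 1 by field_simp]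
      exact Real.sqrt_one
    rw [mul_assoc, this, mul_one]

lemma gaussian_conv (a b : ℝ) (u v : NNReal) :
    Measure.map (fun p : ℝ × ℝ => p.1 + p.2) ((gaussianReal a u).prod (gaussianReal b v))
      = gaussianReal (a + b) (u + v) := by
  by_cases hu : u = 0
  · subst hu
    rw [gaussianReal_zero_var, Measure.dirac_prod,
      Measure.map_map measurable_add (measurable_prodMk_left), zero_add]
    have : ((fun p : ℝ × ℝ => p.1 + p.2) ∘ Prod.mk a) = (a + ·) := rfl
    rw [this, gaussianReal_map_const_add, add_comm]
  by_cases hv : v = 0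
  · subst hv
    rw [gaussianReal_zero_var, Measure.prod_dirac,
      Measure.map_map measurable_add (measurable_prodMk_right), add_zero]
    have : ((fun p : ℝ × ℝ => p.1 + p.2) ∘ (fun x => (x, b))) = (· + b) := rfl
    rw [this, gaussianReal_map_add_const]
  -- main case
  have hg : Measurable (fun q : ℝ × ℝ => gaussianPDF (b + q.1) v q.2) := by
    simp only [gaussianPDF]
    apply Measurable.ennreal_ofReal
    have : (fun q : ℝ × ℝ => gaussianPDFReal (b + q.1) v q.2)
        = fun q : ℝ × ℝ => gaussianPDFReal b v (q.2 - q.1) := by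
      funext q; rw [gaussianPDFReal_sub]
    rw [this]
    exact (measurable_gaussianPDFReal b v).comp (measurable_snd.sub measurable_fst)
  have hmeas2 : Measurable (fun q : ℝ × ℝ => gaussianPDF a u q.1 * gaussianPDF (b + q.1) v q.2) :=
    ((measurable_gaussianPDF a u).comp measurable_fst).mul hg
  ext s hs
  rw [Measure.map_apply measurable_add hs, Measure.prod_apply (measurable_add hs)]
  have h1 : ∀ x : ℝ, (gaussianReal b v) (Prod.mk x ⁻¹' ((fun p : ℝ × ℝ => p.1 + p.2) ⁻¹' s))
      = ∫⁻ y in s, gaussianPDF (b + x) v y := by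
    intro x
    have hpre : (Prod.mk x ⁻¹' ((fun p : ℝ × ℝ => p.1 + p.2) ⁻¹' s)) = (x + ·) ⁻¹' s := rfl
    rw [hpre, ← Measure.map_apply (measurable_const_add x) hs, gaussianReal_map_const_add,
      gaussianReal_of_var_ne_zero _ hv, withDensity_apply _ hs]
  simp_rw [h1]
  rw [gaussianReal_of_var_ne_zero _ hu,
    lintegral_withDensity_eq_lintegral_mul _ (measurable_gaussianPDF a u)]
  · simp only [Pi.mul_apply]
    have swap : ∫⁻ x, gaussianPDF a u x * ∫⁻ y in s, gaussianPDF (b + x) v y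
        = ∫⁻ y in s, ∫⁻ x, gaussianPDF a u x * gaussianPDF (b + x) v y := by
      have : ∀ x, gaussianPDF a u x * ∫⁻ y in s, gaussianPDF (b + x) v y
          = ∫⁻ y in s, gaussianPDF a u x * gaussianPDF (b + x) v y := fun x =>
        (lintegral_const_mul _ (measurable_gaussianPDF _ v)).symm
      simp_rw [this]
      exact lintegral_lintegral_swap hmeas2.aemeasurable
    rw [swap]
    have hpoint : ∀ y : ℝ, (∫⁻ x, gaussianPDF a u x * gaussianPDF (b + x) v y)
        = gaussianPDF (a + b) (u + v) y := by
      intro y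
      have hrw : ∀ x : ℝ, gaussianPDF a u x * gaussianPDF (b + x) v y
          = ENNReal.ofReal (gaussianPDFReal a u x * gaussianPDFReal b v (y - x)) := by
        intro x
        rw [gaussianPDF, gaussianPDF, ← gaussianPDFReal_sub y x,
          ← ENNReal.ofReal_mul (gaussianPDFReal_nonneg a u x)]
      simp_rw [hrw]
      rw [← ofReal_integral_eq_lintegral_ofReal (pdf_conv_aux a b u v hu hv y).1
        (Filter.Eventually.of_forall fun x =>
          mul_nonneg (gaussianPDFReal_nonneg _ _ _) (gaussianPDFReal_nonneg _ _ _)),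
        (pdf_conv_aux a b u v hu hv y).2, gaussianPDF]
    simp_rw [hpoint]
    rw [gaussianReal_of_var_ne_zero _ (by simp [hu]), withDensity_apply _ hs]
  · exact Measurable.lintegral_prod_right (f := fun x y => gaussianPDF (b + x) v y) hg

lemma map_sum_gaussian {Ωs : Type*} [MeasurableSpace Ωs] (P : Measure Ωs)
    [IsProbabilityMeasure P] {ι : Type*} (Y : ι → Ωs → ℝ) (hY : ∀ i, Measurable (Y i))
    (hind : iIndepFun Y P)
    (μ : ι → ℝ) (w : ι → NNReal) (hlaw : ∀ i, Measure.map (Y i) P = gaussianReal (μ i) (w i))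
    (s : Finset ι) :
    Measure.map (fun ω => ∑ i ∈ s, Y i ω) P
      = gaussianReal (∑ i ∈ s, μ i) (∑ i ∈ s, w i) := by
  classical
  induction s using Finset.induction_on with
  | empty =>
      simp only [Finset.sum_empty]
      rw [show (fun _ : Ωs => (0:ℝ)) = (fun _ => (0:ℝ)) from rfl, Measure.map_const,
        measure_univ, one_smul, gaussianReal_zero_var]
  | @insert i t hi ih =>
      have hT : Measurable (fun ω => ∑ j ∈ t, Y j ω) := by
        apply Finset.measurable_sum
        exact fun j _ => hY j
      have hIndep : IndepFun (Y i) (fun ω => ∑ j ∈ t, Y j ω) P := by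
        have := (hind.indepFun_finsetSum_of_notMem hY hi).symm
        have he : (∑ j ∈ t, Y j) = fun ω => ∑ j ∈ t, Y j ω := by
          funext ω; simp [Finset.sum_apply]
        rwa [he] at this
      have hpair : Measure.map (fun ω => (Y i ω, ∑ j ∈ t, Y j ω)) P
          = (Measure.map (Y i) P).prod (Measure.map (fun ω => ∑ j ∈ t, Y j ω) P) :=
        (indepFun_iff_map_prod_eq_prod_map_map (hY i).aemeasurable hT.aemeasurable).mp hIndep
      have hsum : (fun ω => ∑ j ∈ insert i t, Y j ω)
          = (fun p : ℝ × ℝ => p.1 + p.2) ∘ (fun ω => (Y i ω, ∑ j ∈ t, Y j ω)) := by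
        funext ω; simp [Finset.sum_insert hi]
      rw [hsum, ← Measure.map_map measurable_add ((hY i).prodMk hT), hpair, hlaw i, ih,
        gaussian_conv, Finset.sum_insert hi, Finset.sum_insert hi]

lemma beta_lb (n : ℕ) (m : ℕ) (hm : 0 < m) (Ω : ℝ) (hΩ : 0 ≤ Ω)
    (σ : Fin n → ℝ) (hσ : ∀ j, 0 ≤ σ j) (x : Fin n → ℝ) (hx : ∀ j, x j = 0 ∨ x j = 1)
    (hn4 : (n:ℝ) ≤ 4 * m^2)
    (s2 : ℝ) (hs2 : s2 = ∑ j, (σ j * x j)^2) (hs2pos : 0 < s2) (β : ℝ)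
    (hub : β ∈ upperBounds {v : ℝ | ∃ z : Fin n → Fin m → ℝ,
        (∀ j k, 0 ≤ z j k ∧ z j k ≤ 1) ∧
        (∑ j, ∑ k : Fin m, (2 * ((k : ℕ) : ℝ) + 1) * z j k) ≤ (m : ℝ) ^ 2 ∧
        v = ∑ j, ∑ k : Fin m, Ω * σ j / m * x j * z j k}) :
    Ω * Real.sqrt s2 * Real.sqrt (1 - n / (4 * m^2)) ≤ β := by
  have hmR : (0:ℝ) < m := by exact_mod_cast hm
  set s : ℝ := Real.sqrt s2 with hs
  have hspos : 0 < s := Real.sqrt_pos.mpr hs2pos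
  have hs2' : s^2 = s2 := Real.sq_sqrt hs2pos.le
  have harg : (0:ℝ) ≤ (m:ℝ)^2 - n/4 := by linarith
  set T : ℝ := Real.sqrt ((m:ℝ)^2 - n/4) with hT
  have hTnonneg : 0 ≤ T := Real.sqrt_nonneg _
  have hT2 : T^2 = (m:ℝ)^2 - n/4 := Real.sq_sqrt harg
  have hTm : T ≤ m := by
    rw [hT]
    calc Real.sqrt ((m:ℝ)^2 - n/4) ≤ Real.sqrt ((m:ℝ)^2) :=
          Real.sqrt_le_sqrt (by linarith)
      _ = m := Real.sqrt_sq hmR.le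
  set t : Fin n → ℝ := fun j => σ j * x j * T / s with ht
  have hxnn : ∀ j, 0 ≤ x j := fun j => by rcases hx j with h | h <;> rw [h] <;> norm_num
  have hsxnn : ∀ j, 0 ≤ σ j * x j := fun j => mul_nonneg (hσ j) (hxnn j)
  have htnn : ∀ j, 0 ≤ t j := fun j =>
    div_nonneg (mul_nonneg (hsxnn j) hTnonneg) hspos.le
  have hsxle : ∀ j, σ j * x j ≤ s := by
    intro j
    have h1 : (σ j * x j)^2 ≤ s2 := by
      rw [hs2]
      exact Finset.single_le_sum (f := fun j => (σ j * x j)^2)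
        (fun i _ => sq_nonneg _) (Finset.mem_univ j)
    calc σ j * x j = Real.sqrt ((σ j * x j)^2) := (Real.sqrt_sq (hsxnn j)).symm
      _ ≤ s := Real.sqrt_le_sqrt h1
  have htle : ∀ j, t j ≤ m := by
    intro j
    have h1 : σ j * x j * T ≤ s * T := mul_le_mul_of_nonneg_right (hsxle j) hTnonneg
    have h2 : t j ≤ s * T / s := by
      show σ j * x j * T / s ≤ s * T / s
      gcongr
    rw [mul_comm s T, mul_div_assoc, div_self hspos.ne', mul_one] at h2
    linarith
  set z : Fin n → Fin m → ℝ := fun j k => clamp01 (t j - (k:ℕ)) with hz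
  have hzmem : (∑ j, ∑ k : Fin m, Ω * σ j / m * x j * z j k) ∈
      {v : ℝ | ∃ z : Fin n → Fin m → ℝ,
        (∀ j k, 0 ≤ z j k ∧ z j k ≤ 1) ∧
        (∑ j, ∑ k : Fin m, (2 * ((k : ℕ) : ℝ) + 1) * z j k) ≤ (m : ℝ) ^ 2 ∧
        v = ∑ j, ∑ k : Fin m, Ω * σ j / m * x j * z j k} := by
    refine ⟨z, fun j k => ⟨clamp01_nonneg _, clamp01_le_one _⟩, ?_, rfl⟩
    have hcost : ∀ j, (∑ k : Fin m, (2 * ((k:ℕ):ℝ) + 1) * z j k) ≤ (t j)^2 + 1/4 := by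
      intro j
      rw [hz]
      rw [Fin.sum_univ_eq_sum_range (fun k => (2 * (k:ℝ) + 1) * clamp01 (t j - k)) m]
      exact clampsum_cost m (t j) (htnn j)
    calc (∑ j, ∑ k : Fin m, (2 * ((k:ℕ):ℝ) + 1) * z j k)
        ≤ ∑ j, ((t j)^2 + 1/4) := Finset.sum_le_sum (fun j _ => hcost j)
      _ = (∑ j, (t j)^2) + n/4 := by
          rw [Finset.sum_add_distrib]
          simp [Finset.card_univ]
          ring
      _ = T^2 + n/4 := by
          congr 1
          have : ∀ j, (t j)^2 = (σ j * x j)^2 * (T^2 / s2) := by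
            intro j
            rw [ht, ← hs2']
            field_simp
          simp_rw [this]
          rw [← Finset.sum_mul, ← hs2]
          field_simp
      _ ≤ (m:ℝ)^2 := by rw [hT2]; linarith
  have hval : Ω * s * Real.sqrt (1 - n / (4 * m^2))
      ≤ ∑ j, ∑ k : Fin m, Ω * σ j / m * x j * z j k := by
    have hgain : ∀ j, Ω * σ j / m * x j * t j ≤ ∑ k : Fin m, Ω * σ j / m * x j * z j k := by
      intro j
      have hsum : t j ≤ ∑ k : Fin m, z j k := by
        have := clampsum_gain m (t j)
        rw [min_eq_left (htle j)] at this
        rw [hz, Fin.sum_univ_eq_sum_range (fun k => clamp01 (t j - k)) m]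
        exact this
      rw [← Finset.mul_sum]
      exact mul_le_mul_of_nonneg_left hsum
        (mul_nonneg (div_nonneg (mul_nonneg hΩ (hσ j)) hmR.le) (hxnn j))
    have hTs : T = m * Real.sqrt (1 - n / (4 * m^2)) := by
      have harg2 : (m:ℝ)^2 - n/4 = m^2 * (1 - n / (4 * m^2)) := by
        field_simp
      rw [hT, harg2, Real.sqrt_mul (sq_nonneg _), Real.sqrt_sq hmR.le]
    calc Ω * s * Real.sqrt (1 - n / (4 * m^2))
        = ∑ j, Ω * σ j / m * x j * t j := by
          have : ∀ j, Ω * σ j / m * x j * t j = (σ j * x j)^2 * (Ω * T / (m * s)) := by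
            intro j
            rw [ht]
            field_simp
          simp_rw [this]
          rw [← Finset.sum_mul, ← hs2, hTs]
          rw [← hs2']
          field_simp
      _ ≤ _ := Finset.sum_le_sum (fun j _ => hgain j)
  exact hval.trans (hub hzmem)

lemma gauss_pdf_mono {c x : ℝ} (hc : 0 ≤ c) (hcx : c ≤ x) :
    gaussianPDFReal 0 1 x ≤ gaussianPDFReal 0 1 c := by
  simp only [gaussianPDFReal, NNReal.coe_one, mul_one, sub_zero]
  apply mul_le_mul_of_nonneg_left _ (by positivity)
  apply Real.exp_le_exp.mpr
  have : c^2 ≤ x^2 := by nlinarith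
  linarith

lemma gauss_Ioc_le (c d : ℝ) (hc : 0 ≤ c) (hcd : c ≤ d) :
    ((gaussianReal 0 1) (Set.Ioc c d)).toReal
      ≤ (d - c) * ((Real.sqrt (2 * π))⁻¹ * Real.exp (-c ^ 2 / 2)) := by
  rw [gaussianReal_apply_eq_integral 0 one_ne_zero (Set.Ioc c d),
    ENNReal.toReal_ofReal (by
      apply integral_nonneg
      exact fun x => gaussianPDFReal_nonneg _ _ _)]
  have h1 : (∫ x in Set.Ioc c d, gaussianPDFReal 0 1 x)
      ≤ ∫ _x in Set.Ioc c d, gaussianPDFReal 0 1 c := by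
    apply setIntegral_mono_on
    · exact (integrable_gaussianPDFReal 0 1).integrableOn
    · exact integrableOn_const measure_Ioc_lt_top.ne
    · exact measurableSet_Ioc
    · exact fun x hx => gauss_pdf_mono hc hx.1.le
  have h2 : (∫ _x in Set.Ioc c d, gaussianPDFReal 0 1 c)
      = (d - c) * gaussianPDFReal 0 1 c := by
    rw [setIntegral_const, Real.volume_real_Ioc_of_le hcd, smul_eq_mul]
  have h3 : gaussianPDFReal 0 1 c = (Real.sqrt (2 * π))⁻¹ * Real.exp (-c ^ 2 / 2) := by
    simp [gaussianPDFReal]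
  rw [h3] at h1 h2
  linarith

end Stmt10Aux

section Stmt10Main
open Real Finset
/-- **Proposition 2.** Probability guarantee for feasible solutions to
(RKPm) with the inner polyhedral approximation, for independent normal weights.
`Ω = Φ⁻¹(ρ)` (expressed by `Φ(Ω) = ρ` with `Φ` the standard normal CDF), `m ≥ √n/2`,
`β(x, m²)` is the inner-approximation robust term, and `x ∈ {0,1}^n` is feasible to (RKPm).
Then `ρ − P(Σ_j a_j x_j ≤ b)` is at most
`(1/√(2π))·Ω·(1 − √(1 − n/(4m²)))·exp(−½·Ω²·(1 − n/(4m²)))`. -/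
theorem stmt_10 {Ωs : Type*} [MeasurableSpace Ωs] (P : Measure Ωs) [IsProbabilityMeasure P]
    (n : ℕ) (hn : 0 < n) (ρ : ℝ) (hρ : 1 / 2 ≤ ρ) (hρ' : ρ < 1)
    (Ω : ℝ) (hΩ : 0 ≤ Ω)
    (hΦ : ((gaussianReal 0 1) (Set.Iic Ω)).toReal = ρ)
    (σ : Fin n → ℝ) (hσ : ∀ j, 0 ≤ σ j) (ahat : Fin n → ℝ) (b : ℝ)
    (m : ℕ) (hm : 0 < m) (hmn : Real.sqrt n / 2 ≤ (m : ℝ))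
    (a : Fin n → Ωs → ℝ) (hmeas : ∀ j, Measurable (a j))
    (hindep : iIndepFun a P)
    (hdist : ∀ j, Measure.map (a j) P = gaussianReal (ahat j) ⟨σ j ^ 2, sq_nonneg _⟩)
    (x : Fin n → ℝ) (hx : ∀ j, x j = 0 ∨ x j = 1) (β : ℝ)
    (hβ : IsGreatest
      {v : ℝ | ∃ z : Fin n → Fin m → ℝ,
        (∀ j k, 0 ≤ z j k ∧ z j k ≤ 1) ∧
        (∑ j, ∑ k : Fin m, (2 * ((k : ℕ) : ℝ) + 1) * z j k) ≤ (m : ℝ) ^ 2 ∧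
        v = ∑ j, ∑ k : Fin m, Ω * σ j / m * x j * z j k} β)
    (hfeas : (∑ j, ahat j * x j) + β ≤ b) :
    ρ - (P {ω | (∑ j, a j ω * x j) ≤ b}).toReal ≤
      1 / Real.sqrt (2 * Real.pi) * Ω * (1 - Real.sqrt (1 - n / (4 * m ^ 2))) *
        Real.exp (-(1 / 2) * Ω ^ 2 * (1 - n / (4 * m ^ 2))) := by
  have hmR : (0:ℝ) < m := by exact_mod_cast hm
  have hn4 : (n:ℝ) ≤ 4 * m^2 := by
    have h1 : Real.sqrt n ≤ 2 * m := by linarith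
    have h2 : (0:ℝ) ≤ Real.sqrt n := Real.sqrt_nonneg _
    nlinarith [Real.sq_sqrt (Nat.cast_nonneg n : (0:ℝ) ≤ n)]
  have harg : (0:ℝ) ≤ 1 - n / (4 * m^2) := by
    rw [sub_nonneg, div_le_one (by positivity)]
    exact hn4
  set r : ℝ := Real.sqrt (1 - n / (4 * m^2)) with hr
  have hrnn : 0 ≤ r := Real.sqrt_nonneg _
  have hr2 : r^2 = 1 - n / (4 * m^2) := Real.sq_sqrt harg
  have hr1 : r ≤ 1 := by
    rw [hr]
    apply Real.sqrt_le_one.mpr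
    have : (0:ℝ) ≤ (n:ℝ) / (4 * m^2) := by positivity
    linarith
  have hRHS : 0 ≤ 1 / Real.sqrt (2 * Real.pi) * Ω * (1 - r) *
      Real.exp (-(1 / 2) * Ω ^ 2 * (1 - n / (4 * m ^ 2))) := by
    apply mul_nonneg
    apply mul_nonneg
    apply mul_nonneg
    · positivity
    · exact hΩ
    · linarith
    · positivity
  -- random variables Y j = a j * x j
  set Y : Fin n → Ωs → ℝ := fun j ω => a j ω * x j with hY
  have hYmeas : ∀ j, Measurable (Y j) := fun j => (hmeas j).mul_const (x j)
  have hYindep : iIndepFun Y P := by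
    have := hindep.comp (g := fun j => (· * x j)) (fun j => measurable_mul_const (x j))
    exact this
  set w : Fin n → NNReal := fun j => ⟨(σ j * x j)^2, sq_nonneg _⟩ with hw
  have hYlaw : ∀ j, Measure.map (Y j) P = gaussianReal (ahat j * x j) (w j) := by
    intro j
    have h1 : Y j = (· * x j) ∘ (a j) := rfl
    have h2 : (⟨x j ^ 2, sq_nonneg _⟩ : NNReal) * ⟨σ j ^ 2, sq_nonneg _⟩ = w j := by
      apply NNReal.coe_injective
      push_cast
      show x j ^ 2 * σ j ^ 2 = (σ j * x j) ^ 2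
      ring
    have hd : Measure.map (a j) P = gaussianReal (ahat j) (⟨σ j ^ 2, sq_nonneg _⟩ : NNReal) :=
      hdist j
    rw [h1, ← Measure.map_map (measurable_mul_const (x j)) (hmeas j), hd,
      ]; exact (gaussianReal_map_mul_const (x j)).trans
        (by rw [mul_comm (x j) (ahat j)]; exact congrArg _ h2)
  set M : ℝ := ∑ j, ahat j * x j with hM
  set V : NNReal := ∑ j, w j with hV
  have hSlaw : Measure.map (fun ω => ∑ j, Y j ω) P = gaussianReal M V :=
    map_sum_gaussian P Y hYmeas hYindep _ w hYlaw Finset.univ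
  have hSmeas : Measurable (fun ω => ∑ j, Y j ω) :=
    Finset.measurable_sum _ (fun j _ => hYmeas j)
  have hPeval : P {ω | (∑ j, a j ω * x j) ≤ b} = gaussianReal M V (Set.Iic b) := by
    have : {ω | (∑ j, a j ω * x j) ≤ b} = (fun ω => ∑ j, Y j ω) ⁻¹' Set.Iic b := rfl
    rw [this, ← Measure.map_apply hSmeas measurableSet_Iic, hSlaw]
  set s2 : ℝ := ∑ j, (σ j * x j)^2 with hs2
  have hVs2 : (V:ℝ) = s2 := by
    rw [hV, hs2]
    push_cast
    rfl
  have hβ0 : 0 ≤ β := by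
    apply hβ.2
    refine ⟨fun _ _ => 0, fun j k => by norm_num, by simp [sq_nonneg], by simp⟩
  rcases eq_or_lt_of_le (show (0:ℝ) ≤ s2 by rw [hs2]; positivity) with hs2z | hs2pos
  · -- degenerate case: variance zero
    have hVz : V = 0 := by
      have : (V:ℝ) = 0 := by rw [hVs2, ← hs2z]
      exact_mod_cast this
    rw [hPeval, hVz, gaussianReal_zero_var]
    have hMb : M ≤ b := by rw [hM]; linarith
    rw [Measure.dirac_apply' _ measurableSet_Iic]
    simp only [Set.indicator_of_mem (Set.mem_Iic.mpr hMb), Pi.one_apply, ENNReal.toReal_one]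
    linarith
  · -- main case
    set s : ℝ := Real.sqrt s2 with hsdef
    have hspos : 0 < s := Real.sqrt_pos.mpr hs2pos
    have hs2' : s^2 = s2 := Real.sq_sqrt hs2pos.le
    have hβlb : Ω * s * r ≤ β := beta_lb n m hm Ω hΩ σ hσ x hx hn4 s2 hs2 hs2pos β hβ.2
    have hVne : V ≠ 0 := by
      intro h
      rw [h] at hVs2
      simp at hVs2
      rw [← hVs2] at hs2pos
      exact lt_irrefl _ hs2pos
    -- transform CDF
    have hgauss_eq : gaussianReal M V = Measure.map (· + M)
        (Measure.map (s * ·) (gaussianReal 0 1)) := by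
      rw [gaussianReal_map_const_mul, gaussianReal_map_add_const]
      have h1 : s * 0 + M = M := by ring
      have h2 : (⟨s^2, sq_nonneg _⟩ : NNReal) * 1 = V := by
        apply NNReal.coe_injective
        push_cast
        show s ^ 2 * 1 = (V:ℝ)
        rw [mul_one, hs2', hVs2]
      rw [h1]; exact congrArg _ h2.symm
    have hCDF : gaussianReal M V (Set.Iic b) = gaussianReal 0 1 (Set.Iic ((b - M)/s)) := by
      rw [hgauss_eq, Measure.map_apply (measurable_add_const M) measurableSet_Iic]
      have h1 : ((· + M) ⁻¹' Set.Iic b) = Set.Iic (b - M) := by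
        ext y; simp only [Set.mem_preimage, Set.mem_Iic]; constructor <;> intro h <;> linarith
      rw [h1, Measure.map_apply (measurable_const_mul s) measurableSet_Iic]
      congr 1
      ext y
      simp only [Set.mem_preimage, Set.mem_Iic]
      rw [le_div_iff₀ hspos, mul_comm]
    have hΩr_le : Ω * r ≤ (b - M)/s := by
      rw [le_div_iff₀ hspos]
      have : Ω * s * r ≤ b - M := by rw [hM] at hfeas ⊢; linarith
      nlinarith [this]
    have hmono : (gaussianReal 0 1 (Set.Iic (Ω * r))).toReal
        ≤ (gaussianReal 0 1 (Set.Iic ((b - M)/s))).toReal := by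
      apply ENNReal.toReal_mono (measure_ne_top _ _)
      exact measure_mono (Set.Iic_subset_Iic.mpr hΩr_le)
    have hΩrΩ : Ω * r ≤ Ω := by nlinarith
    have hsplit : (gaussianReal 0 1 (Set.Iic Ω)).toReal
        = (gaussianReal 0 1 (Set.Iic (Ω * r))).toReal
          + (gaussianReal 0 1 (Set.Ioc (Ω * r) Ω)).toReal := by
      rw [← ENNReal.toReal_add (measure_ne_top _ _) (measure_ne_top _ _),
        ← measure_union (Set.Iic_disjoint_Ioc le_rfl) measurableSet_Ioc,
        Set.Iic_union_Ioc_eq_Iic hΩrΩ]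
    have htail := gauss_Ioc_le (Ω * r) Ω (mul_nonneg hΩ hrnn) hΩrΩ
    have hfinal : (Ω - Ω * r) * ((Real.sqrt (2 * π))⁻¹ * Real.exp (-(Ω * r) ^ 2 / 2))
        = 1 / Real.sqrt (2 * Real.pi) * Ω * (1 - r) *
          Real.exp (-(1 / 2) * Ω ^ 2 * (1 - n / (4 * m ^ 2))) := by
      have h1 : (-(Ω * r) ^ 2 / 2) = -(1 / 2) * Ω ^ 2 * (1 - n / (4 * m ^ 2)) := by
        rw [mul_pow, hr2]; ring
      rw [h1]
      ring
    rw [hPeval, hCDF, ← hΦ]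
    calc (gaussianReal 0 1 (Set.Iic Ω)).toReal
          - (gaussianReal 0 1 (Set.Iic ((b - M)/s))).toReal
        ≤ (gaussianReal 0 1 (Set.Iic Ω)).toReal
          - (gaussianReal 0 1 (Set.Iic (Ω * r))).toReal := by linarith
      _ = (gaussianReal 0 1 (Set.Ioc (Ω * r) Ω)).toReal := by rw [hsplit]; ring
      _ ≤ (Ω - Ω * r) * ((Real.sqrt (2 * π))⁻¹ * Real.exp (-(Ω * r) ^ 2 / 2)) := htail
      _ = _ := hfinal
end Stmt10Main
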